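/- Let $a, c > 0$ and $\sigma \geq 0$. Then for every $r > 0$ and $R > 0$ with $r \leq R$, the function $g_r(t) = \frac{\chi_{[0,R^2]}(t)}{\sqrt{t}} - \frac{\chi_{[r^2, R^2 + r^2]}(t)}{\sqrt{t - r^2}}$ satisfies $\int_0^{R^2} |g_r(t)|\, e^{-r^2/(c t)}\, \frac{dt}{\sqrt{t}} \leq C$ and $\frac{1}{R} \int_{R^2}^{R^2 + r^2} |g_r(t)|\, dt \leq C$, with $C$ depending only on $c$ and not on $r, R$. -/

import Mathlib

open MeasureTheory Set

private lemma exp_neg_le_inv {x : ℝ} (hx : 0 < x) : Real.exp (-x) ≤ 1 / x := by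
  rw [Real.exp_neg]
  rw [div_eq_inv_mul, mul_one]
  exact inv_anti₀ hx (by nlinarith [Real.add_one_le_exp x])

set_option maxHeartbeats 1000000 in
theorem stmt_7 (c : ℝ) (hc : 0 < c) :
    ∃ C : ℝ, 0 < C ∧ ∀ r R : ℝ, 0 < r → r ≤ R →
      (∫ t in Set.Ioc (0 : ℝ) (R ^ 2),
          |Set.indicator (Set.Icc (0 : ℝ) (R ^ 2)) (fun t => 1 / Real.sqrt t) t -
              Set.indicator (Set.Icc (r ^ 2) (R ^ 2 + r ^ 2))
                (fun t => 1 / Real.sqrt (t - r ^ 2)) t| *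
            Real.exp (-(r ^ 2) / (c * t)) / Real.sqrt t) ≤ C ∧
      (1 / R) * (∫ t in Set.Ioc (R ^ 2) (R ^ 2 + r ^ 2),
          |Set.indicator (Set.Icc (0 : ℝ) (R ^ 2)) (fun t => 1 / Real.sqrt t) t -
              Set.indicator (Set.Icc (r ^ 2) (R ^ 2 + r ^ 2))
                (fun t => 1 / Real.sqrt (t - r ^ 2)) t|) ≤ C := by
  refine ⟨c + 4, by positivity, fun r R hr hrR => ?_⟩
  have hR : 0 < R := hr.trans_le hrR
  have hr2 : 0 < r ^ 2 := by positivity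
  have hR2 : 0 < R ^ 2 := by positivity
  have hr2R2 : r ^ 2 ≤ R ^ 2 := by nlinarith
  set F : ℝ → ℝ := fun t =>
    |Set.indicator (Set.Icc (0 : ℝ) (R ^ 2)) (fun t => 1 / Real.sqrt t) t -
        Set.indicator (Set.Icc (r ^ 2) (R ^ 2 + r ^ 2)) (fun t => 1 / Real.sqrt (t - r ^ 2)) t|
    with hF
  -- measurability of F
  have hFmeas : Measurable F := by
    apply Measurable.abs
    apply Measurable.sub
    · exact (measurable_const.div (Real.continuous_sqrt.measurable)).indicator measurableSet_Icc
    · exact (measurable_const.div ((Real.continuous_sqrt.measurable).comp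
        (measurable_id.sub measurable_const))).indicator measurableSet_Icc
  constructor
  · -- first integral
    set f : ℝ → ℝ := fun t => F t * Real.exp (-(r ^ 2) / (c * t)) / Real.sqrt t with hf
    have hfmeas : Measurable f := by
      apply Measurable.div
      · exact hFmeas.mul (Real.measurable_exp.comp
          (measurable_const.div (measurable_const.mul measurable_id)))
      · exact Real.continuous_sqrt.measurable
    have hfnonneg : ∀ t, 0 ≤ f t := fun t => by
      apply div_nonneg (mul_nonneg (abs_nonneg _) (Real.exp_pos _).le) (Real.sqrt_nonneg _)
    -- pointwise on (0, r²]
    have hbound1 : ∀ t ∈ Ioc (0:ℝ) (r ^ 2), f t ≤ c / r ^ 2 := by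
      intro t ht
      obtain ⟨ht0, htr⟩ := ht
      have h2z : Set.indicator (Set.Icc (r ^ 2) (R ^ 2 + r ^ 2))
          (fun t => 1 / Real.sqrt (t - r ^ 2)) t = 0 := by
        rcases lt_or_eq_of_le htr with h | h
        · apply Set.indicator_of_notMem
          intro hm; exact absurd hm.1 (not_le.mpr h)
        · subst h
          simp [Set.indicator_apply]
      have h1v : Set.indicator (Set.Icc (0 : ℝ) (R ^ 2)) (fun t => 1 / Real.sqrt t) t
          = 1 / Real.sqrt t :=
        Set.indicator_of_mem (Set.mem_Icc.mpr ⟨ht0.le, htr.trans hr2R2⟩) _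
      have hFt : F t = 1 / Real.sqrt t := by
        rw [hF]; simp only [h2z, h1v, sub_zero]
        exact abs_of_nonneg (by positivity)
      have hst : Real.sqrt t * Real.sqrt t = t := Real.mul_self_sqrt ht0.le
      have hsqpos : 0 < Real.sqrt t := Real.sqrt_pos.mpr ht0
      have hfe : f t = Real.exp (-(r ^ 2) / (c * t)) / t := by
        show F t * Real.exp (-(r ^ 2) / (c * t)) / Real.sqrt t = _
        rw [hFt, ← hst]; field_simp
        rw [Real.sqrt_sq hsqpos.le]
      have hxpos : 0 < r ^ 2 / (c * t) := by positivity
      have hexp : Real.exp (-(r ^ 2) / (c * t)) ≤ c * t / r ^ 2 := by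
        have h1 := exp_neg_le_inv hxpos
        have h2 : (-(r ^ 2) / (c * t)) = -(r ^ 2 / (c * t)) := by ring
        rw [h2]
        calc Real.exp (-(r ^ 2 / (c * t))) ≤ 1 / (r ^ 2 / (c * t)) := h1
          _ = c * t / r ^ 2 := by field_simp
      rw [hfe]
      calc Real.exp (-(r ^ 2) / (c * t)) / t ≤ (c * t / r ^ 2) / t := by gcongr
        _ = c / r ^ 2 := by field_simp
    -- dominating function on (r², R²]
    set h₂ : ℝ → ℝ := fun t => r ^ 2 / (t * Real.sqrt t * Real.sqrt (t - r ^ 2)) with hh2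
    have hbound2 : ∀ t ∈ Ioc (r ^ 2) (R ^ 2), f t ≤ h₂ t := by
      intro t ht
      obtain ⟨ht1, ht2⟩ := ht
      have ht0 : 0 < t := hr2.trans ht1
      have htu : 0 < t - r ^ 2 := sub_pos.mpr ht1
      set s := Real.sqrt t with hsdef
      set u := Real.sqrt (t - r ^ 2) with hudef
      have hspos : 0 < s := Real.sqrt_pos.mpr ht0
      have hupos : 0 < u := Real.sqrt_pos.mpr htu
      have hss : s * s = t := Real.mul_self_sqrt ht0.le
      have huu : u * u = t - r ^ 2 := Real.mul_self_sqrt htu.le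
      have hus : u ≤ s := Real.sqrt_le_sqrt (by linarith)
      have h1v : Set.indicator (Set.Icc (0 : ℝ) (R ^ 2)) (fun t => 1 / Real.sqrt t) t
          = 1 / s := Set.indicator_of_mem (Set.mem_Icc.mpr ⟨ht0.le, ht2⟩) _
      have h2v : Set.indicator (Set.Icc (r ^ 2) (R ^ 2 + r ^ 2))
          (fun t => 1 / Real.sqrt (t - r ^ 2)) t = 1 / u :=
        Set.indicator_of_mem (Set.mem_Icc.mpr ⟨ht1.le, by linarith⟩) _
      have hFt : F t = 1 / u - 1 / s := by
        rw [hF]; simp only [h1v, h2v]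
        rw [abs_sub_comm, abs_of_nonneg]
        have : 1 / s ≤ 1 / u := by
          apply one_div_le_one_div_of_le hupos hus
        linarith
      have hexp1 : Real.exp (-(r ^ 2) / (c * t)) ≤ 1 := by
        apply Real.exp_le_one_iff.mpr
        apply div_nonpos_of_nonpos_of_nonneg (neg_nonpos.mpr hr2.le) (by positivity)
      have hfle : f t ≤ (1 / u - 1 / s) / s := by
        show F t * Real.exp (-(r ^ 2) / (c * t)) / s ≤ _
        rw [hFt]
        have h0 : 0 ≤ 1 / u - 1 / s := by
          have : 1 / s ≤ 1 / u := one_div_le_one_div_of_le hupos hus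
          linarith
        calc (1 / u - 1 / s) * Real.exp (-(r ^ 2) / (c * t)) / s
            ≤ (1 / u - 1 / s) * 1 / s := by gcongr
          _ = (1 / u - 1 / s) / s := by ring
      refine hfle.trans ?_
      show _ ≤ r ^ 2 / (t * s * u)
      rw [div_le_div_iff₀ hspos (by positivity)]
      have heq : (1 / u - 1 / s) * (t * s * u) = (s - u) * t := by
        field_simp
      rw [heq]
      nlinarith [mul_nonneg (mul_nonneg (sub_nonneg.mpr hus) hupos.le) hspos.le, hss, huu]
    -- integrability of h₂ on (r²,R²]
    have hh2meas : Measurable h₂ := by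
      apply measurable_const.div
      exact ((measurable_id.mul Real.continuous_sqrt.measurable).mul
        (Real.continuous_sqrt.measurable.comp (measurable_id.sub measurable_const)))
    have hbase : IntervalIntegrable (fun x : ℝ => (x - r ^ 2) ^ (-(1/2) : ℝ))
        volume (r ^ 2) (R ^ 2) := by
      have h := (intervalIntegral.intervalIntegrable_rpow'
        (a := 0) (b := R ^ 2 - r ^ 2) (r := -(1/2)) (by norm_num)).comp_sub_right (r ^ 2)
      simpa using h
    have hd_int : IntegrableOn (fun t : ℝ => (1 / r) * (t - r ^ 2) ^ (-(1/2) : ℝ))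
        (Ioc (r ^ 2) (R ^ 2)) volume := by
      have := (intervalIntegrable_iff_integrableOn_Ioc_of_le hr2R2).mp hbase
      exact this.const_mul _
    have hh2_int : IntegrableOn h₂ (Ioc (r ^ 2) (R ^ 2)) volume := by
      apply hd_int.mono' hh2meas.aestronglyMeasurable
      rw [ae_restrict_iff' measurableSet_Ioc]
      filter_upwards with t
      intro ht
      obtain ⟨ht1, ht2⟩ := ht
      have ht0 : 0 < t := hr2.trans ht1
      have htu : 0 < t - r ^ 2 := sub_pos.mpr ht1
      have hupos : 0 < Real.sqrt (t - r ^ 2) := Real.sqrt_pos.mpr htu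
      have hh2nn : 0 ≤ h₂ t := by
        rw [hh2]; positivity
      rw [Real.norm_of_nonneg hh2nn]
      rw [Real.rpow_neg htu.le, ← Real.sqrt_eq_rpow]
      have h1 : r ≤ Real.sqrt t := by
        rw [show r = Real.sqrt (r ^ 2) from (Real.sqrt_sq hr.le).symm]
        exact Real.sqrt_le_sqrt ht1.le
      have key : h₂ t ≤ r ^ 2 / (r ^ 2 * r * Real.sqrt (t - r ^ 2)) := by
        show r ^ 2 / (t * Real.sqrt t * Real.sqrt (t - r ^ 2)) ≤ _
        apply div_le_div_of_nonneg_left (by positivity) (by positivity)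
        have hts : r ^ 2 * r ≤ t * Real.sqrt t :=
          mul_le_mul ht1.le h1 hr.le ht0.le
        exact mul_le_mul_of_nonneg_right hts hupos.le
      refine key.trans (le_of_eq ?_)
      rw [Real.sqrt_eq_rpow]
      field_simp
    -- integrability of f on the two pieces
    have hfint1 : IntegrableOn f (Ioc (0:ℝ) (r ^ 2)) volume := by
      apply Integrable.mono' (g := fun _ => c / r ^ 2)
      · exact integrableOn_const measure_Ioc_lt_top.ne
      · exact hfmeas.aestronglyMeasurable
      · rw [ae_restrict_iff' measurableSet_Ioc]
        filter_upwards with t ht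
        rw [Real.norm_of_nonneg (hfnonneg t)]
        exact hbound1 t ht
    have hfint2 : IntegrableOn f (Ioc (r ^ 2) (R ^ 2)) volume := by
      apply hh2_int.mono' hfmeas.aestronglyMeasurable
      rw [ae_restrict_iff' measurableSet_Ioc]
      filter_upwards with t ht
      rw [Real.norm_of_nonneg (hfnonneg t)]
      exact hbound2 t ht
    -- split the integral
    have hsplit : Ioc (0:ℝ) (R ^ 2) = Ioc (0:ℝ) (r ^ 2) ∪ Ioc (r ^ 2) (R ^ 2) :=
      (Set.Ioc_union_Ioc_eq_Ioc hr2.le hr2R2).symm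
    have hdisj : Disjoint (Ioc (0:ℝ) (r ^ 2)) (Ioc (r ^ 2) (R ^ 2)) :=
      Set.Ioc_disjoint_Ioc.mpr (by simp [hr2R2, hr2.le])
    have hA : (∫ t in Ioc (0:ℝ) (r ^ 2), f t) ≤ c := by
      have h1 : (∫ t in Ioc (0:ℝ) (r ^ 2), f t) ≤ ∫ _t in Ioc (0:ℝ) (r ^ 2), c / r ^ 2 :=
        setIntegral_mono_on hfint1 (integrableOn_const measure_Ioc_lt_top.ne)
          measurableSet_Ioc hbound1
      have h2 : (∫ _t in Ioc (0:ℝ) (r ^ 2), c / r ^ 2) = c := by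
        rw [setIntegral_const, Real.volume_real_Ioc_of_le hr2.le, sub_zero,
          smul_eq_mul]
        field_simp
      linarith
    have hB : (∫ t in Ioc (r ^ 2) (R ^ 2), f t) ≤ 2 := by
      have h1 : (∫ t in Ioc (r ^ 2) (R ^ 2), f t) ≤ ∫ t in Ioc (r ^ 2) (R ^ 2), h₂ t :=
        setIntegral_mono_on hfint2 hh2_int measurableSet_Ioc hbound2
      -- FTC for h₂ with antiderivative G t = 2 √(t-r²)/√t
      set G : ℝ → ℝ := fun t => 2 * Real.sqrt (t - r ^ 2) / Real.sqrt t with hG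
      have hGcont : ContinuousOn G (Icc (r ^ 2) (R ^ 2)) := by
        apply ContinuousOn.div
        · exact (continuous_const.mul (Real.continuous_sqrt.comp
            (continuous_id.sub continuous_const))).continuousOn
        · exact Real.continuous_sqrt.continuousOn
        · intro x hx
          exact (Real.sqrt_pos.mpr (lt_of_lt_of_le hr2 hx.1)).ne'
      have hGderiv : ∀ x ∈ Ioo (r ^ 2) (R ^ 2), HasDerivWithinAt G (h₂ x) (Ioi x) x := by
        intro x hx
        have hx1 : r ^ 2 < x := hx.1
        have hx0 : 0 < x := hr2.trans hx1
        have hxu : 0 < x - r ^ 2 := sub_pos.mpr hx1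
        have hspos : 0 < Real.sqrt x := Real.sqrt_pos.mpr hx0
        have hupos : 0 < Real.sqrt (x - r ^ 2) := Real.sqrt_pos.mpr hxu
        have hds : HasDerivAt Real.sqrt (1 / (2 * Real.sqrt x)) x :=
          Real.hasDerivAt_sqrt hx0.ne'
        have hdu : HasDerivAt (fun t => Real.sqrt (t - r ^ 2))
            (1 / (2 * Real.sqrt (x - r ^ 2))) x := by
          have h := (Real.hasDerivAt_sqrt hxu.ne').comp x
            ((hasDerivAt_id x).sub_const (r ^ 2))
          simpa [Function.comp_def] using h
        have hder : HasDerivAt G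
            ((2 * (1 / (2 * Real.sqrt (x - r ^ 2))) * Real.sqrt x -
              2 * Real.sqrt (x - r ^ 2) * (1 / (2 * Real.sqrt x))) / Real.sqrt x ^ 2) x :=
          (hdu.const_mul 2).div hds hspos.ne'
        have heq : (2 * (1 / (2 * Real.sqrt (x - r ^ 2))) * Real.sqrt x -
            2 * Real.sqrt (x - r ^ 2) * (1 / (2 * Real.sqrt x))) / Real.sqrt x ^ 2
            = h₂ x := by
          have hss : Real.sqrt x * Real.sqrt x = x := Real.mul_self_sqrt hx0.le
          have huu : Real.sqrt (x - r ^ 2) * Real.sqrt (x - r ^ 2) = x - r ^ 2 :=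
            Real.mul_self_sqrt hxu.le
          have key : (2 * (1 / (2 * Real.sqrt (x - r ^ 2))) * Real.sqrt x -
              2 * Real.sqrt (x - r ^ 2) * (1 / (2 * Real.sqrt x))) / Real.sqrt x ^ 2
              = (Real.sqrt x * Real.sqrt x - Real.sqrt (x - r ^ 2) * Real.sqrt (x - r ^ 2)) /
                (Real.sqrt (x - r ^ 2) * Real.sqrt x * (Real.sqrt x * Real.sqrt x)) := by
            field_simp
          have hr2eq : Real.sqrt x * Real.sqrt x -
              Real.sqrt (x - r ^ 2) * Real.sqrt (x - r ^ 2) = r ^ 2 := by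
            rw [hss, huu]; ring
          rw [key, hr2eq, hss]
          show _ = r ^ 2 / (x * Real.sqrt x * Real.sqrt (x - r ^ 2))
          ring
        rw [heq] at hder
        exact hder.hasDerivWithinAt
      have hGint : IntervalIntegrable h₂ volume (r ^ 2) (R ^ 2) :=
        (intervalIntegrable_iff_integrableOn_Ioc_of_le hr2R2).mpr hh2_int
      have hval : (∫ t in Ioc (r ^ 2) (R ^ 2), h₂ t) = G (R ^ 2) - G (r ^ 2) := by
        rw [← intervalIntegral.integral_of_le hr2R2]
        exact intervalIntegral.integral_eq_sub_of_hasDeriv_right_of_le hr2R2 hGcont hGderiv hGint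
      have hGr : G (r ^ 2) = 0 := by
        rw [hG]; simp
      have hGR : G (R ^ 2) ≤ 2 := by
        rw [hG]
        show 2 * Real.sqrt (R ^ 2 - r ^ 2) / Real.sqrt (R ^ 2) ≤ 2
        rw [Real.sqrt_sq hR.le, div_le_iff₀ hR]
        have h1 : Real.sqrt (R ^ 2 - r ^ 2) ≤ R := by
          have := Real.sqrt_le_sqrt (show R ^ 2 - r ^ 2 ≤ R ^ 2 by nlinarith)
          rwa [Real.sqrt_sq hR.le] at this
        nlinarith [Real.sqrt_nonneg (R ^ 2 - r ^ 2)]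
      have h2 : (∫ t in Ioc (r ^ 2) (R ^ 2), h₂ t) ≤ 2 := by
        rw [hval, hGr, sub_zero]; exact hGR
      linarith
    calc (∫ t in Ioc (0:ℝ) (R ^ 2), f t)
        = (∫ t in Ioc (0:ℝ) (r ^ 2), f t) + ∫ t in Ioc (r ^ 2) (R ^ 2), f t := by
          rw [hsplit, setIntegral_union hdisj measurableSet_Ioc hfint1 hfint2]
      _ ≤ c + 4 := by linarith
  · -- second integral
    have hcongr : EqOn F (fun t => (t - r ^ 2) ^ (-(1/2) : ℝ)) (Ioc (R ^ 2) (R ^ 2 + r ^ 2)) := by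
      intro t ht
      obtain ⟨ht1, ht2⟩ := ht
      have htu : 0 < t - r ^ 2 := by nlinarith
      have h1z : Set.indicator (Set.Icc (0 : ℝ) (R ^ 2)) (fun t => 1 / Real.sqrt t) t = 0 :=
        Set.indicator_of_notMem (fun hm => absurd hm.2 (not_le.mpr ht1)) _
      have h2v : Set.indicator (Set.Icc (r ^ 2) (R ^ 2 + r ^ 2))
          (fun t => 1 / Real.sqrt (t - r ^ 2)) t = 1 / Real.sqrt (t - r ^ 2) :=
        Set.indicator_of_mem (Set.mem_Icc.mpr ⟨by nlinarith, ht2⟩) _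
      show F t = _
      rw [hF]
      simp only [h1z, h2v, zero_sub, abs_neg]
      rw [abs_of_nonneg (by positivity), Real.rpow_neg htu.le, ← Real.sqrt_eq_rpow, one_div]
    rw [setIntegral_congr_fun measurableSet_Ioc hcongr]
    rw [← intervalIntegral.integral_of_le (by nlinarith : (R ^ 2 : ℝ) ≤ R ^ 2 + r ^ 2)]
    rw [show (fun t : ℝ => (t - r ^ 2) ^ (-(1/2) : ℝ)) = fun t : ℝ =>
      (fun u : ℝ => u ^ (-(1/2) : ℝ)) (t - r ^ 2) from rfl]
    rw [intervalIntegral.integral_comp_sub_right (fun u : ℝ => u ^ (-(1/2) : ℝ)) (r ^ 2)]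
    rw [integral_rpow (Or.inl (by norm_num))]
    have hRr : (0:ℝ) ≤ R ^ 2 - r ^ 2 := by nlinarith
    have h1 : ((R ^ 2 + r ^ 2 - r ^ 2 : ℝ)) ^ ((-(1/2) : ℝ) + 1) = R := by
      rw [show (R ^ 2 + r ^ 2 - r ^ 2 : ℝ) = R ^ 2 by ring,
        show ((-(1/2) : ℝ) + 1) = 1/2 by norm_num, ← Real.sqrt_eq_rpow, Real.sqrt_sq hR.le]
    have h2 : (0:ℝ) ≤ (R ^ 2 - r ^ 2 : ℝ) ^ ((-(1/2) : ℝ) + 1) := Real.rpow_nonneg hRr _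
    rw [h1]
    rw [show ((-(1/2) : ℝ) + 1) = 1/2 by norm_num] at h2 ⊢
    have hform : 1 / R * ((R - (R ^ 2 - r ^ 2) ^ ((1:ℝ)/2)) / (1/2))
        = 2 * (R - (R ^ 2 - r ^ 2) ^ ((1:ℝ)/2)) / R := by
      field_simp
    rw [hform, div_le_iff₀ hR]
    nlinarith [mul_pos hc hR, h2, hR]
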